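/- arXiv:1804.01152 — 2 statements merged into one kernel-verified Lean document; each statement's English description precedes it below -/
import Mathlib

section
/- Given β ≥ 0, there exist α = (α_1, 1) ∈ ℝ² and constants c_1, c_2, c_3 > 0 such that for the linear form L_α(x_1, x_2) = α_1 x_1 + x_2: (i) every best approximation vector z ∈ ℤ² for L_α satisfies c_1·|z|^{−β} ≤ |L_α(z)|·|z| ≤ c_2·|z|^{−β}; (ii) every z ∈ ℤ² with z_1 ≠ 0 which is not an integer multiple of a best approximation vector for L_α satisfies |L_α(z)|·|z| ≥ c_3. -/
open scoped InnerProductSpace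

noncomputable section

/-- `ℝ^n` with the Euclidean structure. -/
abbrev E (n : ℕ) : Type := EuclideanSpace ℝ (Fin n)

/-- The projection `x ↦ x̲` forgetting the last coordinate. -/
def pr (d : ℕ) (x : E d) : E (d - 1) :=
  WithLp.toLp 2 (fun i : Fin (d - 1) => x (Fin.castLE (Nat.sub_le d 1) i))

/-- The canonical embedding of `ℤ^d` into `ℝ^d`. -/
def toE (d : ℕ) (z : Fin d → ℤ) : E d := WithLp.toLp 2 (fun i => (z i : ℝ))

/-- The `m`-dimensional volume of the parallelepiped spanned by `v 0, …, v (m-1)`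
(square root of the Gram determinant). -/
def gramVol {n m : ℕ} (v : Fin m → E n) : ℝ :=
  Real.sqrt ((Matrix.of (fun i j : Fin m => ⟪v i, v j⟫_ℝ)).det)

/-- `z` is a best approximation vector for the linear form `L_α : x ↦ ⟪α, x⟫`. -/
def IsBestApprox (d : ℕ) (α : E d) (z : Fin d → ℤ) : Prop :=
  pr d (toE d z) ≠ 0 ∧
  ∀ z' : Fin d → ℤ, pr d (toE d z') ≠ 0 →
    (‖pr d (toE d z')‖ ≤ ‖pr d (toE d z)‖ → |⟪α, toE d z⟫_ℝ| ≤ |⟪α, toE d z'⟫_ℝ|) ∧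
    (‖pr d (toE d z')‖ < ‖pr d (toE d z)‖ → |⟪α, toE d z⟫_ℝ| < |⟪α, toE d z'⟫_ℝ|)

/-- `det Λ̲_{k,l}` for a sequence of integer vectors: the `l`-dimensional volume of the
parallelepiped spanned by `z̲_k, …, z̲_{k+l-1}`. -/
def detL (d : ℕ) (z : ℕ → Fin d → ℤ) (k l : ℕ) : ℝ :=
  gramVol (fun i : Fin l => pr d (toE d (z (k + i.1))))

/-- `D_{k,l} = det Λ̲_{k,l} / |z̲_k|^l`. -/
def Dq (d : ℕ) (z : ℕ → Fin d → ℤ) (k l : ℕ) : ℝ :=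
  detL d z k l / ‖pr d (toE d (z k))‖ ^ l

/-- `B_k = |z̲_{k+1}| / |z̲_k|`. -/
def Bq (d : ℕ) (z : ℕ → Fin d → ℤ) (k : ℕ) : ℝ :=
  ‖pr d (toE d (z (k + 1)))‖ / ‖pr d (toE d (z k))‖

/-- `R_k = 1 / (2 |z̲_{k+1}| det Λ̲_{k,d-1})`. -/
def Rq (d : ℕ) (z : ℕ → Fin d → ℤ) (k : ℕ) : ℝ :=
  1 / (2 * ‖pr d (toE d (z (k + 1)))‖ * detL d z k (d - 1))

/-- `v 0, …, v (d-1)` form a basis of the lattice `ℤ^d`. -/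
def IsZBasis (d : ℕ) (v : Fin d → Fin d → ℤ) : Prop :=
  IsUnit ((Matrix.of (fun i j : Fin d => v j i)).det)

namespace BAux

noncomputable def aa (β : ℝ) (m : ℤ) : ℤ := max 2 ⌈(m : ℝ) ^ β⌉
noncomputable def s (β : ℝ) : ℕ → ℤ × ℤ
  | 0 => (1, 0)
  | 1 => (2, 1)
  | (k+2) => (aa β (s β (k+1)).1 * (s β (k+1)).1 + (s β k).1,
              aa β (s β (k+1)).1 * (s β (k+1)).2 + (s β k).2)
noncomputable def q (β : ℝ) (k : ℕ) : ℤ := (s β k).1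
noncomputable def p (β : ℝ) (k : ℕ) : ℤ := (s β k).2
variable (β : ℝ)
lemma q0 : q β 0 = 1 := rfl
lemma q1 : q β 1 = 2 := rfl
lemma p0 : p β 0 = 0 := rfl
lemma p1 : p β 1 = 1 := rfl
lemma qrec (k : ℕ) : q β (k+2) = aa β (q β (k+1)) * q β (k+1) + q β k := rfl
lemma prec (k : ℕ) : p β (k+2) = aa β (q β (k+1)) * p β (k+1) + p β k := rfl
lemma aa2 (m : ℤ) : 2 ≤ aa β m := le_max_left _ _
lemma hq1 (k : ℕ) : 1 ≤ q β k := by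
  induction k using Nat.twoStepInduction with
  | zero => norm_num [q0]
  | one => norm_num [q1]
  | more k ih1 ih2 =>
    rw [qrec]
    nlinarith [aa2 β (q β (k+1))]
lemma hq2 (k : ℕ) : 2 * q β k ≤ q β (k+1) := by
  cases k with
  | zero => norm_num [q0, q1]
  | succ k =>
    rw [qrec]
    nlinarith [aa2 β (q β (k+1)), hq1 β k, hq1 β (k+1)]
lemma hq_lt (k : ℕ) : q β k < q β (k+1) := by
  have := hq2 β k; have := hq1 β k; linarith
lemma hq4 (k : ℕ) : 4 * q β k ≤ q β (k+2) := by
  have h1 := hq2 β k; have h2 := hq2 β (k+1); linarith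
lemma hq_ge (k : ℕ) : (k : ℤ) + 1 ≤ q β k := by
  induction k with
  | zero => norm_num [q0]
  | succ k ih =>
    have := hq2 β k
    have := hq1 β k
    push_cast
    linarith
lemma hdet (k : ℕ) : p β (k+1) * q β k - p β k * q β (k+1) = (-1)^k := by
  induction k with
  | zero => norm_num [q0, q1, p0, p1]
  | succ k ih =>
    rw [qrec, prec, pow_succ]
    linarith [ih]

/-! Real part -/

noncomputable def Q (β : ℝ) (k : ℕ) : ℝ := (q β k : ℝ)
noncomputable def P (β : ℝ) (k : ℕ) : ℝ := (p β k : ℝ)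
noncomputable def x (β : ℝ) (k : ℕ) : ℝ := P β k / Q β k

lemma hQ1 (k : ℕ) : 1 ≤ Q β k := by unfold Q; exact_mod_cast hq1 β k
lemma hQpos (k : ℕ) : 0 < Q β k := by linarith [hQ1 β k]
lemma hQlt (k : ℕ) : Q β k < Q β (k+1) := by unfold Q; exact_mod_cast hq_lt β k
lemma hQ4' (k : ℕ) : 4 * Q β k ≤ Q β (k+2) := by unfold Q; exact_mod_cast hq4 β k
lemma hQ2' (k : ℕ) : 2 * Q β k ≤ Q β (k+1) := by unfold Q; exact_mod_cast hq2 β k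

lemma hdetR (k : ℕ) : P β (k+1) * Q β k - P β k * Q β (k+1) = (-1)^k := by
  have := hdet β k
  unfold P Q
  exact_mod_cast congrArg (Int.cast : ℤ → ℝ) this

lemma hxdiff (k : ℕ) : x β (k+1) - x β k = (-1)^k / (Q β k * Q β (k+1)) := by
  have h1 := hQpos β k
  have h2 := hQpos β (k+1)
  have hd := hdetR β k
  have he : x β (k+1) - x β k = (P β (k+1) * Q β k - P β k * Q β (k+1)) / (Q β k * Q β (k+1)) := by
    unfold x; field_simp
  rw [he, hd]

noncomputable def t (β : ℝ) (k : ℕ) : ℝ := 1 / (Q β k * Q β (k+1))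

lemma ht_pos (k : ℕ) : 0 < t β k := by
  unfold t
  exact div_pos one_pos (mul_pos (hQpos β k) (hQpos β (k+1)))

lemma ht_lt (k : ℕ) : t β (k+1) < t β k := by
  unfold t
  apply div_lt_div_of_pos_left one_pos (mul_pos (hQpos β k) (hQpos β (k+1)))
  have h1 := hQpos β k
  have h2 := hQpos β (k+1)
  have h3 := hQlt β k
  have h4 := hQlt β (k+1)
  nlinarith

lemma hx_even (k : ℕ) : x β (2*k) - x β (2*k+1) = -(t β (2*k)) := by
  have := hxdiff β (2*k)
  rw [Even.neg_one_pow ⟨k, by ring⟩] at this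
  unfold t; linarith

lemma hx_odd (k : ℕ) : x β (2*k+1) - x β (2*k+2) = t β (2*k+1) := by
  have h := hxdiff β (2*k+1)
  rw [Odd.neg_one_pow ⟨k, by ring⟩] at h
  have e : 2*k+1+1 = 2*k+2 := by ring
  rw [e, neg_div] at h
  unfold t
  rw [e]
  linarith

lemma heven_step (k : ℕ) : x β (2*k) < x β (2*(k+1)) := by
  have h1 := hx_even β k
  have h2 := hx_odd β k
  have h3 := ht_lt β (2*k)
  have h4 := ht_pos β (2*k+1)
  have : 2*(k+1) = 2*k+2 := by ring
  rw [this]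
  linarith

lemma hodd_step (k : ℕ) : x β (2*(k+1)+1) < x β (2*k+1) := by
  have h1 := hx_odd β k
  have h2 := hx_even β (k+1)
  have h3 := ht_lt β (2*k+1)
  have h4 := ht_pos β (2*k+2)
  have e1 : 2*(k+1) = 2*k+2 := by ring
  have e2 : 2*(k+1)+1 = 2*k+3 := by ring
  rw [e2]
  rw [e1] at h2
  linarith [ht_pos β (2*(k+1))]

lemma heven_mono : StrictMono (fun k => x β (2*k)) :=
  strictMono_nat_of_lt_succ (fun k => heven_step β k)

lemma hodd_anti : StrictAnti (fun k => x β (2*k+1)) :=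
  strictAnti_nat_of_succ_lt (fun k => hodd_step β k)

lemma hcross (j k : ℕ) : x β (2*j) < x β (2*k+1) := by
  have h1 : x β (2*j) ≤ x β (2*(max j k)) := (heven_mono β).monotone (le_max_left j k)
  have h2 : x β (2*(max j k)) < x β (2*(max j k)+1) := by
    have := hx_even β (max j k)
    have := ht_pos β (2*(max j k))
    linarith
  have h3 : x β (2*(max j k)+1) ≤ x β (2*k+1) := (hodd_anti β).antitone (le_max_right j k)
  linarith

noncomputable def alpha (β : ℝ) : ℝ := ⨆ k, x β (2*k)

lemma hbdd : BddAbove (Set.range fun k => x β (2*k)) := by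
  refine ⟨x β 1, ?_⟩
  rintro _ ⟨j, rfl⟩
  have := hcross β j 0
  simpa using this.le

lemma halpha_ge (k : ℕ) : x β (2*k) ≤ alpha β := le_ciSup (hbdd β) k

lemma halpha_le (k : ℕ) : alpha β ≤ x β (2*k+1) :=
  ciSup_le (fun j => (hcross β j k).le)

/-- key two-sided bound -/
lemma heps_ub (k : ℕ) : (-1)^k * (alpha β - x β k) ≤ t β k := by
  rcases Nat.even_or_odd k with ⟨m, hm⟩ | ⟨m, hm⟩
  · subst hm
    rw [show m + m = 2*m by ring, Even.neg_one_pow ⟨m, by ring⟩, one_mul]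
    have h1 := halpha_le β m
    have h2 := hx_even β m
    linarith
  · subst hm
    rw [show 2*m+1 = 2*m+1 by ring, Odd.neg_one_pow ⟨m, rfl⟩]
    have h1 := halpha_ge β (m+1)
    have h2 := hx_odd β m
    rw [show 2*(m+1) = 2*m+2 by ring] at h1
    linarith

lemma heps_lb (k : ℕ) : t β k - t β (k+1) ≤ (-1)^k * (alpha β - x β k) := by
  rcases Nat.even_or_odd k with ⟨m, hm⟩ | ⟨m, hm⟩
  · subst hm
    rw [show m + m = 2*m by ring, Even.neg_one_pow ⟨m, by ring⟩, one_mul]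
    have h1 := halpha_ge β (m+1)
    rw [show 2*(m+1) = 2*m+2 by ring] at h1
    have h2 := hx_even β m
    have h3 := hx_odd β m
    have : (2*m) + 1 = 2*m+1 := rfl
    linarith
  · subst hm
    rw [Odd.neg_one_pow ⟨m, rfl⟩]
    have h1 := halpha_le β (m+1)
    rw [show 2*(m+1)+1 = 2*m+3 by ring] at h1
    have h2 := hx_odd β m
    have h3 := hxdiff β (2*m+2)
    rw [Even.neg_one_pow ⟨m+1, by ring⟩] at h3
    have : t β (2*m+2) = 1 / (Q β (2*m+2) * Q β (2*m+3)) := rfl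
    have h4 : x β (2*m+3) - x β (2*m+2) = t β (2*m+2) := by
      rw [this]; linarith
    linarith

/-- D k = |q_k α - p_k|, with sign (-1)^k -/
noncomputable def D (β : ℝ) (k : ℕ) : ℝ := (-1)^k * (Q β k * alpha β - P β k)

lemma hD_eq (k : ℕ) : D β k = Q β k * ((-1)^k * (alpha β - x β k)) := by
  unfold D x
  have h := hQpos β k
  field_simp

lemma hD_ub (k : ℕ) : D β k * Q β (k+1) ≤ 1 := by
  rw [hD_eq]
  have h1 := heps_ub β k
  have hk := hQpos β k
  have hk1 := hQpos β (k+1)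
  have h2 : Q β k * ((-1)^k * (alpha β - x β k)) * Q β (k+1) ≤ Q β k * t β k * Q β (k+1) := by
    have := mul_le_mul_of_nonneg_left h1 hk.le
    exact mul_le_mul_of_nonneg_right this hk1.le
  have h3 : Q β k * t β k * Q β (k+1) = 1 := by
    unfold t; field_simp
  linarith

lemma hD_lb (k : ℕ) : 3 ≤ 4 * (D β k * Q β (k+1)) := by
  rw [hD_eq]
  have h1 := heps_lb β k
  have hk := hQpos β k
  have hk1 := hQpos β (k+1)
  have hk2 := hQpos β (k+2)
  have h4 := hQ4' β k
  have h3 : Q β k * (t β k - t β (k+1)) * Q β (k+1) = 1 - Q β k / Q β (k+2) := by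
    unfold t; field_simp
  have h5 : Q β k / Q β (k+2) ≤ 1/4 := by
    rw [div_le_div_iff₀ hk2 (by norm_num)]
    linarith
  have h2 : Q β k * (t β k - t β (k+1)) * Q β (k+1) ≤ Q β k * ((-1)^k * (alpha β - x β k)) * Q β (k+1) := by
    have := mul_le_mul_of_nonneg_left h1 hk.le
    exact mul_le_mul_of_nonneg_right this hk1.le
  linarith

lemma hD_pos (k : ℕ) : 0 < D β k := by
  have h1 := hD_lb β k
  have h2 := hQpos β (k+1)
  nlinarith

lemma hD_lt (k : ℕ) : D β (k+1) < D β k := by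
  have h1 := hD_lb β k
  have h2 := hD_ub β (k+1)
  have h3 := hQpos β (k+1)
  have h4 := hQpos β (k+2)
  have h5 : 2 * Q β (k+1) ≤ Q β (k+2) := hQ2' β (k+1)
  -- D (k+1) ≤ 1/Q(k+2) ≤ 1/(2 Q(k+1)) < 3/(4 Q(k+1)) ≤ D k
  have hDk1 : D β (k+1) * (2 * Q β (k+1)) ≤ 1 := by
    nlinarith [hD_pos β (k+1)]
  nlinarith [hD_pos β (k+1)]

lemma halpha_nonneg : 0 ≤ alpha β := by
  have := halpha_ge β 0
  simpa [x, P, Q, p0, q0] using this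

lemma halpha_le_half : alpha β ≤ 1/2 := by
  have := halpha_le β 0
  have e : x β (2*0+1) = 1/2 := by
    norm_num [x, P, Q, p1, q1]
  linarith [e ▸ this]


section S3
variable (β : ℝ)

lemma hD_def (j : ℕ) : D β j = (-1)^j * (Q β j * alpha β - P β j) := rfl

/-! bounds on Q (k+1) in terms of Q k ^ β -/

lemma haa_ge (hβ : 0 ≤ β) (m : ℤ) (hm : 1 ≤ m) : (m : ℝ) ^ β ≤ (aa β m : ℝ) := by
  have h1 : ((⌈(m : ℝ) ^ β⌉ : ℤ) : ℝ) ≥ (m : ℝ) ^ β := Int.le_ceil _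
  have h2 : (⌈(m : ℝ) ^ β⌉ : ℤ) ≤ aa β m := le_max_right _ _
  have h3 : ((⌈(m : ℝ) ^ β⌉ : ℤ) : ℝ) ≤ ((aa β m : ℤ) : ℝ) := by exact_mod_cast h2
  linarith

lemma haa_le (hβ : 0 ≤ β) (m : ℤ) (hm : 1 ≤ m) : (aa β m : ℝ) ≤ (m : ℝ) ^ β + 2 := by
  have hm1 : (1 : ℝ) ≤ (m : ℝ) := by exact_mod_cast hm
  have hpow1 : (1 : ℝ) ≤ (m : ℝ) ^ β := Real.one_le_rpow hm1 hβ
  have h1 : ((⌈(m : ℝ) ^ β⌉ : ℤ) : ℝ) < (m : ℝ) ^ β + 1 := Int.ceil_lt_add_one _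
  unfold aa
  push_cast
  rw [max_le_iff]
  constructor <;> [linarith; linarith]

lemma hQrpow1 (hβ : 0 ≤ β) (k : ℕ) : 1 ≤ Q β k ^ β := Real.one_le_rpow (hQ1 β k) hβ

lemma hQ'_lb (hβ : 0 ≤ β) (k : ℕ) : Q β k ^ β * Q β k ≤ Q β (k+1) := by
  cases k with
  | zero =>
    have e0 : Q β 0 = 1 := by unfold Q; rw [q0]; norm_num
    have e1 : Q β 1 = 2 := by unfold Q; rw [q1]; norm_num
    rw [e0, e1, Real.one_rpow]; norm_num
  | succ j =>
    have hrec := qrec β j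
    have haa := haa_ge β hβ (q β (j+1)) (hq1 β (j+1))
    have hQp := hQpos β (j+1)
    have h1 : 1 ≤ q β j := hq1 β j
    have hcast : Q β (j+2) = (aa β (q β (j+1)) : ℝ) * Q β (j+1) + Q β j := by
      unfold Q; rw [hrec]; push_cast; ring
    have hQj := hQpos β j
    have : Q β (j+1) ^ β * Q β (j+1) ≤ (aa β (q β (j+1)) : ℝ) * Q β (j+1) :=
      mul_le_mul_of_nonneg_right (by rw [show ((q β (j+1) : ℝ)) = Q β (j+1) from rfl] at haa; exact haa) hQp.le
    rw [hcast]
    linarith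

lemma hQ'_ub (hβ : 0 ≤ β) (k : ℕ) : Q β (k+1) ≤ 4 * (Q β k ^ β * Q β k) := by
  cases k with
  | zero =>
    have e0 : Q β 0 = 1 := by unfold Q; rw [q0]; norm_num
    have e1 : Q β 1 = 2 := by unfold Q; rw [q1]; norm_num
    rw [e0, e1, Real.one_rpow]; norm_num
  | succ j =>
    have hrec := qrec β j
    have haa := haa_le β hβ (q β (j+1)) (hq1 β (j+1))
    have hQp := hQpos β (j+1)
    have hQj := hQpos β j
    have hQjj : Q β j ≤ Q β (j+1) := (hQlt β j).le
    have hpow1 : 1 ≤ Q β (j+1) ^ β := hQrpow1 β hβ (j+1)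
    have hcast : Q β (j+2) = (aa β (q β (j+1)) : ℝ) * Q β (j+1) + Q β j := by
      unfold Q; rw [hrec]; push_cast; ring
    rw [hcast]
    have haa' : (aa β (q β (j+1)) : ℝ) ≤ Q β (j+1) ^ β + 2 := haa
    nlinarith

/-! Lemma A -/

lemma lemA (k : ℕ) (a b : ℤ) (h0 : a * q β k + b * q β (k+1) ≠ 0)
    (h1 : |a * q β k + b * q β (k+1)| < q β (k+1)) :
    D β k ≤ |(a : ℝ) * D β k - (b : ℝ) * D β (k+1)| := by
  have hqk := hq1 β k
  have hqk1 := hq1 β (k+1)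
  have hDk := hD_pos β k
  have hDk1 := hD_pos β (k+1)
  rcases eq_or_ne b 0 with rfl | hb
  · have ha : a ≠ 0 := by
      intro h; apply h0; rw [h]; ring
    have ha1 : (1 : ℝ) ≤ |(a : ℝ)| := by
      have := Int.one_le_abs ha
      calc (1:ℝ) ≤ (|a| : ℤ) := by exact_mod_cast this
        _ = |(a:ℝ)| := by push_cast; ring
    rw [Int.cast_zero, zero_mul, sub_zero, abs_mul, abs_of_pos hDk]
    nlinarith
  · rcases eq_or_ne a 0 with rfl | ha
    · exfalso
      rw [zero_mul, zero_add, abs_mul] at h1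
      have hb1 : 1 ≤ |b| := Int.one_le_abs hb
      have : |q β (k+1)| = q β (k+1) := abs_of_pos (by linarith)
      nlinarith [abs_nonneg b]
    · -- both nonzero; sign analysis
      rcases ha.lt_or_gt with hxneg | hxpos
      · rcases hb.lt_or_gt with hyneg | hypos
        · -- both negative: |a q + b q'| ≥ q + q' > q'
          exfalso
          have : a * q β k + b * q β (k+1) ≤ -(q β k + q β (k+1)) := by nlinarith
          have habs := neg_le_abs (a * q β k + b * q β (k+1))
          linarith
        · -- a < 0, b > 0
          have ha1 : (a : ℝ) ≤ -1 := by exact_mod_cast (by omega : a ≤ -1)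
          have hb1 : (1 : ℝ) ≤ (b : ℝ) := by exact_mod_cast (by omega : 1 ≤ b)
          have key : D β k ≤ -((a:ℝ) * D β k - (b:ℝ) * D β (k+1)) := by nlinarith
          calc D β k ≤ -((a:ℝ) * D β k - (b:ℝ) * D β (k+1)) := key
            _ ≤ |(a:ℝ) * D β k - (b:ℝ) * D β (k+1)| := neg_le_abs _
      · rcases hb.lt_or_gt with hyneg | hypos
        · -- a > 0, b < 0
          have ha1 : (1:ℝ) ≤ (a : ℝ) := by exact_mod_cast (by omega : 1 ≤ a)
          have hb1 : (b : ℝ) ≤ -1 := by exact_mod_cast (by omega : b ≤ -1)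
          have key : D β k ≤ (a:ℝ) * D β k - (b:ℝ) * D β (k+1) := by nlinarith
          calc D β k ≤ (a:ℝ) * D β k - (b:ℝ) * D β (k+1) := key
            _ ≤ |(a:ℝ) * D β k - (b:ℝ) * D β (k+1)| := le_abs_self _
        · -- both positive
          exfalso
          have h2 : a * q β k + b * q β (k+1) ≥ q β k + q β (k+1) := by nlinarith
          have := le_abs_self (a * q β k + b * q β (k+1))
          linarith


/-! Lemma B helper : a ≥ 1, b ≤ -1 -/

lemma lemB' (k : ℕ) (a b : ℤ) (ha : 1 ≤ a) (hb : b ≤ -1)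
    (h2 : q β k ≤ |a * q β k + b * q β (k+1)|)
    (h1 : |a * q β k + b * q β (k+1)| < q β (k+1)) :
    (1/4 : ℝ) ≤ |(a : ℝ) * D β k - (b : ℝ) * D β (k+1)| * |(a : ℝ) * q β k + (b : ℝ) * q β (k+1)| := by
  have hDk := hD_pos β k
  have hDk1 := hD_pos β (k+1)
  have hQk : (1:ℝ) ≤ (q β k : ℝ) := by exact_mod_cast hq1 β k
  have hQk1 : (0:ℝ) < (q β (k+1) : ℝ) := by exact_mod_cast lt_of_lt_of_le one_pos (hq1 β (k+1))
  have hA : (1:ℝ) ≤ (a:ℝ) := by exact_mod_cast ha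
  have hB : (b:ℝ) ≤ -1 := by exact_mod_cast hb
  -- value is positive
  have hval : (a:ℝ) * D β k - (b:ℝ) * D β (k+1) > 0 := by nlinarith
  rw [abs_of_pos hval]
  -- |e| in real terms
  have habs : |(a : ℝ) * (q β k : ℝ) + (b : ℝ) * (q β (k+1) : ℝ)| = ((|a * q β k + b * q β (k+1)| : ℤ) : ℝ) := by
    push_cast; ring_nf
  rw [habs]
  set e : ℝ := ((|a * q β k + b * q β (k+1)| : ℤ) : ℝ) with he
  have he1 : (q β k : ℝ) ≤ e := by rw [he]; exact_mod_cast h2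
  have he2 : e < (q β (k+1) : ℝ) := by rw [he]; exact_mod_cast h1
  have he0 : 0 ≤ e := by rw [he]; exact_mod_cast abs_nonneg _
  -- D bounds: note Q β (k+1) = (q β (k+1) : ℝ) by definition
  have hDlb : 3 ≤ 4 * (D β k * (q β (k+1) : ℝ)) := hD_lb β k
  by_cases hcase : (q β (k+1) : ℝ) ≤ 2 * (a:ℝ) * (q β k : ℝ)
  · -- product ≥ a * D k * q k ≥ 1/4
    have key : (1/4:ℝ) ≤ (a:ℝ) * D β k * (q β k : ℝ) := by
      have h6 : 3 * (q β (k+1):ℝ) ≤ 4 * (D β k * (q β (k+1):ℝ)) * (q β (k+1):ℝ) := by nlinarith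
      nlinarith
    have h7 : (a:ℝ) * D β k * (q β k:ℝ) ≤ ((a:ℝ) * D β k - (b:ℝ) * D β (k+1)) * e := by
      have hge : (a:ℝ) * D β k ≤ (a:ℝ) * D β k - (b:ℝ) * D β (k+1) := by nlinarith
      have hposa : 0 < (a:ℝ) * D β k := by nlinarith
      nlinarith
    linarith
  · push_neg at hcase
    -- e = -b q' - a q ≥ q'/2 : since a q k + b q' ≤ aq - q' < q'/2 - q' < 0
    have hlt : (a:ℝ) * (q β k:ℝ) + (b:ℝ) * (q β (k+1):ℝ) < 0 := by nlinarith
    have heeq : e = -((a:ℝ) * (q β k:ℝ) + (b:ℝ) * (q β (k+1):ℝ)) := by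
      rw [he]
      have habsneg : (|a * q β k + b * q β (k+1)| : ℤ) = -(a * q β k + b * q β (k+1)) :=
        abs_of_neg (by exact_mod_cast hlt)
      rw [habsneg]
      push_cast
      ring
    have hege : (q β (k+1):ℝ) / 2 ≤ e := by
      rw [heeq]; nlinarith
    have hDe : D β k ≤ (a:ℝ) * D β k - (b:ℝ) * D β (k+1) := by nlinarith
    -- product ≥ D k * q'/2 ≥ (3/4)/2 ... ≥ 1/4
    have : D β k * ((q β (k+1):ℝ)/2) ≥ 3/8 := by nlinarith
    nlinarith [mul_le_mul hDe hege (by positivity) (le_of_lt (by nlinarith : (0:ℝ) < (a:ℝ) * D β k - (b:ℝ) * D β (k+1)))]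

lemma lemB (k : ℕ) (a b : ℤ) (ha : a ≠ 0) (hb : b ≠ 0)
    (h2 : q β k ≤ |a * q β k + b * q β (k+1)|)
    (h1 : |a * q β k + b * q β (k+1)| < q β (k+1)) :
    (1/4 : ℝ) ≤ |(a : ℝ) * D β k - (b : ℝ) * D β (k+1)| * |(a : ℝ) * q β k + (b : ℝ) * q β (k+1)| := by
  have hqk := hq1 β k
  have hqk1 := hq1 β (k+1)
  rcases ha.lt_or_gt with hxneg | hxpos
  · rcases hb.lt_or_gt with hyneg | hypos
    · -- both negative: |e| ≥ q + q' > q' contra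
      exfalso
      have : a * q β k + b * q β (k+1) ≤ -(q β k + q β (k+1)) := by nlinarith
      have habs := neg_le_abs (a * q β k + b * q β (k+1))
      linarith
    · -- a < 0 < b : apply lemB' to (-a, -b)
      have h2' : q β k ≤ |(-a) * q β k + (-b) * q β (k+1)| := by
        rw [show (-a) * q β k + (-b) * q β (k+1) = -(a * q β k + b * q β (k+1)) by ring, abs_neg]
        exact h2
      have h1' : |(-a) * q β k + (-b) * q β (k+1)| < q β (k+1) := by
        rw [show (-a) * q β k + (-b) * q β (k+1) = -(a * q β k + b * q β (k+1)) by ring, abs_neg]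
        exact h1
      have := lemB' β k (-a) (-b) (by omega) (by omega) h2' h1'
      have e1 : |((-a : ℤ) : ℝ) * D β k - ((-b : ℤ) : ℝ) * D β (k+1)| = |(a:ℝ) * D β k - (b:ℝ) * D β (k+1)| := by
        push_cast
        rw [show -(a:ℝ) * D β k - -(b:ℝ) * D β (k+1) = -((a:ℝ) * D β k - (b:ℝ) * D β (k+1)) by ring, abs_neg]
      have e2 : |((-a : ℤ) : ℝ) * (q β k : ℝ) + ((-b : ℤ) : ℝ) * (q β (k+1) : ℝ)| = |(a:ℝ) * q β k + (b:ℝ) * q β (k+1)| := by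
        push_cast
        rw [show -(a:ℝ) * (q β k:ℝ) + -(b:ℝ) * (q β (k+1):ℝ) = -((a:ℝ) * (q β k:ℝ) + (b:ℝ) * (q β (k+1):ℝ)) by ring, abs_neg]
      rw [e1, e2] at this
      exact this
  · rcases hb.lt_or_gt with hyneg | hypos
    · exact lemB' β k a b (by omega) (by omega) h2 h1
    · exfalso
      have h3 : a * q β k + b * q β (k+1) ≥ q β k + q β (k+1) := by nlinarith
      have := le_abs_self (a * q β k + b * q β (k+1))
      linarith

/-! decomposition -/

lemma hdecomp (k : ℕ) (z0 z1 : ℤ) :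
    ∃ a b : ℤ, z0 = a * q β k + b * q β (k+1) ∧ z1 = -(a * p β k) - b * p β (k+1) := by
  refine ⟨(-1)^k * (p β (k+1) * z0 + q β (k+1) * z1), -((-1)^k) * (p β k * z0 + q β k * z1), ?_, ?_⟩
  · have hd := hdet β k
    rcases Nat.even_or_odd k with hk | hk
    · rw [hk.neg_one_pow] at hd ⊢
      linear_combination (-z0) * hd
    · rw [hk.neg_one_pow] at hd ⊢
      linear_combination z0 * hd
  · have hd := hdet β k
    rcases Nat.even_or_odd k with hk | hk
    · rw [hk.neg_one_pow] at hd ⊢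
      linear_combination (-z1) * hd
    · rw [hk.neg_one_pow] at hd ⊢
      linear_combination z1 * hd

/-! value of linear form -/

lemma hLval (k : ℕ) (a b z0 z1 : ℤ) (h0 : z0 = a * q β k + b * q β (k+1))
    (h1 : z1 = -(a * p β k) - b * p β (k+1)) :
    |alpha β * (z0 : ℝ) + (z1 : ℝ)| = |(a : ℝ) * D β k - (b : ℝ) * D β (k+1)| := by
  have hD : ∀ j, D β j = (-1)^j * (Q β j * alpha β - P β j) := hD_def β
  have e : alpha β * (z0:ℝ) + (z1:ℝ) = (-1:ℝ)^k * ((a:ℝ) * D β k - (b:ℝ) * D β (k+1)) := by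
    rw [hD k, hD (k+1)]
    have hz0 : (z0 : ℝ) = (a:ℝ) * Q β k + (b:ℝ) * Q β (k+1) := by
      rw [h0]; unfold Q; push_cast; ring
    have hz1 : (z1 : ℝ) = -((a:ℝ) * P β k) - (b:ℝ) * P β (k+1) := by
      rw [h1]; unfold P; push_cast; ring
    rw [hz0, hz1, pow_succ]
    have hsq : ((-1:ℝ)^k) * ((-1:ℝ)^k) = 1 := by
      rw [← pow_add]
      exact Even.neg_one_pow ⟨k, by ring⟩
    linear_combination (-((a:ℝ) * (Q β k * alpha β - P β k) + (b:ℝ) * (Q β (k+1) * alpha β - P β (k+1)))) * hsq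
  rw [e, abs_mul, abs_pow, abs_neg, abs_one, one_pow, one_mul]

/-! bracketing -/

lemma hbracket (n : ℤ) (hn : 1 ≤ n) : ∃ k, q β k ≤ n ∧ n < q β (k+1) := by
  obtain ⟨m, hm⟩ : ∃ m, n < q β m := by
    refine ⟨n.toNat, ?_⟩
    have h1 := hq_ge β n.toNat
    have h2 : (n.toNat : ℤ) = n := Int.toNat_of_nonneg (by omega)
    omega
  induction m with
  | zero => rw [q0] at hm; omega
  | succ j ih =>
    by_cases h : q β j ≤ n
    · exact ⟨j, h, hm⟩
    · exact ih (by omega)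


end S3
section S4
/-! glue -/

noncomputable def avec (β : ℝ) : E 2 := WithLp.toLp 2 (fun i : Fin 2 => if i = 0 then alpha β else 1)

variable (β : ℝ)

lemma avec_one : avec β 1 = 1 := by simp [avec]

lemma inner_val (z : Fin 2 → ℤ) :
    ⟪avec β, toE 2 z⟫_ℝ = alpha β * (z 0 : ℝ) + (z 1 : ℝ) := by
  simp [avec, toE, PiLp.inner_apply, Fin.sum_univ_two, RCLike.inner_apply, conj_trivial]
  ring

lemma pr_norm (z : Fin 2 → ℤ) : ‖pr 2 (toE 2 z)‖ = |(z 0 : ℝ)| := by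
  have he : pr 2 (toE 2 z) = WithLp.toLp 2 (fun _ : Fin (2-1) => (z 0 : ℝ)) := by
    ext i
    have hi := i.isLt
    have h2 : Fin.castLE (Nat.sub_le 2 1) i = (0 : Fin 2) := by
      apply Fin.ext
      simp only [Fin.coe_castLE]
      omega
    show (z (Fin.castLE (Nat.sub_le 2 1) i) : ℝ) = (z 0 : ℝ)
    rw [h2]
  rw [he, EuclideanSpace.norm_eq]
  simp [Real.sqrt_sq_eq_abs]

lemma pr_ne_zero (z : Fin 2 → ℤ) : pr 2 (toE 2 z) ≠ 0 ↔ z 0 ≠ 0 := by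
  rw [← norm_ne_zero_iff, pr_norm]
  simp

lemma norm_lower (z : Fin 2 → ℤ) : |(z 0 : ℝ)| ≤ ‖toE 2 z‖ := by
  rw [EuclideanSpace.norm_eq]
  simp only [toE, PiLp.toLp_apply, Real.norm_eq_abs, Fin.sum_univ_two, sq_abs]
  rw [show |(z 0 : ℝ)| = Real.sqrt (((z 0:ℝ))^2) from (Real.sqrt_sq_eq_abs _).symm]
  apply Real.sqrt_le_sqrt
  nlinarith [sq_nonneg ((z 1 : ℝ))]

lemma norm_upper (z : Fin 2 → ℤ) : ‖toE 2 z‖ ≤ |(z 0 : ℝ)| + |(z 1 : ℝ)| := by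
  rw [EuclideanSpace.norm_eq]
  simp only [toE, PiLp.toLp_apply, Real.norm_eq_abs, Fin.sum_univ_two, sq_abs]
  rw [show |(z 0 : ℝ)| + |(z 1:ℝ)| = Real.sqrt ((|(z 0:ℝ)| + |(z 1:ℝ)|)^2) from
    (Real.sqrt_sq (by positivity)).symm]
  apply Real.sqrt_le_sqrt
  nlinarith [sq_abs ((z 0:ℝ)), sq_abs ((z 1:ℝ)), abs_nonneg ((z 0:ℝ)), abs_nonneg ((z 1:ℝ)),
    mul_nonneg (abs_nonneg ((z 0:ℝ))) (abs_nonneg ((z 1:ℝ)))]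

noncomputable def vk (β : ℝ) (k : ℕ) : Fin 2 → ℤ := ![q β k, -(p β k)]

lemma vk0 (k : ℕ) : vk β k 0 = q β k := rfl
lemma vk1 (k : ℕ) : vk β k 1 = -(p β k) := rfl

lemma key_lb (k : ℕ) (z : Fin 2 → ℤ) (hz : z 0 ≠ 0) (hlt : |z 0| < q β (k+1)) :
    D β k ≤ |⟪avec β, toE 2 z⟫_ℝ| := by
  obtain ⟨a, b, h0, h1⟩ := hdecomp β k (z 0) (z 1)
  rw [inner_val, hLval β k a b (z 0) (z 1) h0 h1]
  exact lemA β k a b (by rw [← h0]; exact hz) (by rw [← h0]; exact hlt)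

lemma Lvk (k : ℕ) : |⟪avec β, toE 2 (vk β k)⟫_ℝ| = D β k := by
  rw [inner_val, vk0, vk1]
  have he : alpha β * (q β k : ℝ) + ((-(p β k) : ℤ) : ℝ) = Q β k * alpha β - P β k := by
    unfold Q P; push_cast; ring
  rw [he]
  have hd := hD_def β k
  have hDpos := hD_pos β k
  rcases Nat.even_or_odd k with hk | hk
  · rw [hk.neg_one_pow, one_mul] at hd
    rw [← hd, abs_of_pos hDpos]
  · rw [hk.neg_one_pow] at hd
    have : Q β k * alpha β - P β k = -(D β k) := by linarith
    rw [this, abs_neg, abs_of_pos hDpos]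

lemma best_vk (k : ℕ) : IsBestApprox 2 (avec β) (vk β k) := by
  constructor
  · rw [pr_ne_zero, vk0]
    have := hq1 β k; omega
  · intro z' hz'
    have hz'0 : z' 0 ≠ 0 := (pr_ne_zero z').mp hz'
    have habs1 : 1 ≤ |z' 0| := Int.one_le_abs hz'0
    constructor
    · intro hle
      rw [pr_norm, pr_norm, vk0] at hle
      have hqpos : (0:ℝ) < (q β k : ℝ) := by exact_mod_cast lt_of_lt_of_le one_pos (hq1 β k)
      rw [abs_of_pos hqpos] at hle
      have hle' : |z' 0| ≤ q β k := by
        have : |(z' 0 : ℝ)| = ((|z' 0| : ℤ) : ℝ) := by push_cast; ring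
        rw [this] at hle
        exact_mod_cast hle
      rw [Lvk]
      exact key_lb β k z' hz'0 (lt_of_le_of_lt hle' (hq_lt β k))
    · intro hlt
      rw [pr_norm, pr_norm, vk0] at hlt
      have hqpos : (0:ℝ) < (q β k : ℝ) := by exact_mod_cast lt_of_lt_of_le one_pos (hq1 β k)
      rw [abs_of_pos hqpos] at hlt
      have hlt' : |z' 0| < q β k := by
        have : |(z' 0 : ℝ)| = ((|z' 0| : ℤ) : ℝ) := by push_cast; ring
        rw [this] at hlt
        exact_mod_cast hlt
      cases k with
      | zero => rw [q0] at hlt'; omega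
      | succ j =>
        have := key_lb β j z' hz'0 hlt'
        rw [Lvk]
        exact lt_of_lt_of_le (hD_lt β j) this |>.trans_le (le_refl _) |> fun h => h
          |>.trans_le (le_refl _)


lemma best_char (z : Fin 2 → ℤ) (hb : IsBestApprox 2 (avec β) z) :
    ∃ k, |z 0| = q β k ∧ |⟪avec β, toE 2 z⟫_ℝ| = D β k := by
  have hz0 : z 0 ≠ 0 := (pr_ne_zero z).mp hb.1
  obtain ⟨k, hk1, hk2⟩ := hbracket β |z 0| (Int.one_le_abs hz0)
  refine ⟨k, ?_, ?_⟩
  all_goals {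
    have hge : D β k ≤ |⟪avec β, toE 2 z⟫_ℝ| := key_lb β k z hz0 hk2
    have hvkpr : pr 2 (toE 2 (vk β k)) ≠ 0 := by
      rw [pr_ne_zero, vk0]; have := hq1 β k; omega
    have hcast : ‖pr 2 (toE 2 (vk β k))‖ = ((q β k : ℤ) : ℝ) := by
      rw [pr_norm, vk0]
      exact abs_of_pos (by exact_mod_cast lt_of_lt_of_le one_pos (hq1 β k))
    have hzabs : ‖pr 2 (toE 2 z)‖ = ((|z 0| : ℤ) : ℝ) := by
      rw [pr_norm]; push_cast; ring
    have hle0 : ‖pr 2 (toE 2 (vk β k))‖ ≤ ‖pr 2 (toE 2 z)‖ := by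
      rw [hcast, hzabs]; exact_mod_cast hk1
    have hle : |⟪avec β, toE 2 z⟫_ℝ| ≤ D β k := by
      have := (hb.2 (vk β k) hvkpr).1 hle0
      rw [Lvk] at this
      exact this
    have heqD : |⟪avec β, toE 2 z⟫_ℝ| = D β k := le_antisymm hle hge
    have heqq : |z 0| = q β k := by
      by_contra hne
      have hstrict : q β k < |z 0| := by omega
      have hlt0 : ‖pr 2 (toE 2 (vk β k))‖ < ‖pr 2 (toE 2 z)‖ := by
        rw [hcast, hzabs]; exact_mod_cast hstrict
      have := (hb.2 (vk β k) hvkpr).2 hlt0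
      rw [Lvk] at this
      linarith
    first
      | exact heqq
      | exact heqD
  }

theorem main (β : ℝ) (hβ : 0 ≤ β) :
    ∃ α : E 2, α 1 = 1 ∧
      ∃ c1 c2 c3 : ℝ, 0 < c1 ∧ 0 < c2 ∧ 0 < c3 ∧
        (∀ z : Fin 2 → ℤ, IsBestApprox 2 α z →
          c1 * ‖toE 2 z‖ ^ (-β) ≤ |⟪α, toE 2 z⟫_ℝ| * ‖toE 2 z‖ ∧
          |⟪α, toE 2 z⟫_ℝ| * ‖toE 2 z‖ ≤ c2 * ‖toE 2 z‖ ^ (-β)) ∧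
        (∀ z : Fin 2 → ℤ, z 0 ≠ 0 →
          (¬ ∃ w : Fin 2 → ℤ, ∃ m : ℤ, IsBestApprox 2 α w ∧ z = m • w) →
          c3 ≤ |⟪α, toE 2 z⟫_ℝ| * ‖toE 2 z‖) := by
  refine ⟨avec β, avec_one β, 1/8, 3 * (3:ℝ)^β, 1/4, by norm_num,
    by positivity, by norm_num, ?_, ?_⟩
  · -- part (i)
    intro z hb
    obtain ⟨k, hq0, hL0⟩ := best_char β z hb
    have hz0 : z 0 ≠ 0 := (pr_ne_zero z).mp hb.1
    set N := ‖toE 2 z‖ with hN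
    have hz0r : |(z 0 : ℝ)| = Q β k := by
      unfold Q
      rw [show |(z 0 : ℝ)| = ((|z 0| : ℤ) : ℝ) by push_cast; ring, hq0]
    have hQp := hQpos β k
    have hQp1 := hQpos β (k+1)
    have hQ1k := hQ1 β k
    have hNl : Q β k ≤ N := hz0r ▸ norm_lower z
    have hNpos : 0 < N := lt_of_lt_of_le hQp hNl
    have hDp := hD_pos β k
    have hDub := hD_ub β k
    have hDlb := hD_lb β k
    have hQ2 : (2:ℝ) ≤ Q β (k+1) := by
      have h := hq2 β 0
      have := hQ1 β (k+1)
      -- use 2 * q 0 ≤ q 1? better: 2 * q k ≤ q (k+1), q k ≥ 1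
      have h2 : (2 : ℝ) * Q β k ≤ Q β (k+1) := by
        unfold Q; exact_mod_cast hq2 β k
      nlinarith
    have hDhalf : D β k ≤ 1/2 := by nlinarith
    -- |z 1| ≤ Q β k, hence N ≤ 2 Q β k
    have hLv : ⟪avec β, toE 2 z⟫_ℝ = alpha β * (z 0:ℝ) + (z 1:ℝ) := inner_val β z
    have hLub : ⟪avec β, toE 2 z⟫_ℝ ≤ D β k := (le_abs_self _).trans hL0.le
    have hLlb : -(D β k) ≤ ⟪avec β, toE 2 z⟫_ℝ := (neg_abs_le _).trans_eq' (by rw [hL0])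
    have hz0le : (z 0 : ℝ) ≤ Q β k := (le_abs_self _).trans hz0r.le
    have hz0ge : -(Q β k) ≤ (z 0 : ℝ) := by
      have := neg_abs_le ((z 0 : ℝ)); rw [hz0r] at this; exact this
    have hα0 := halpha_nonneg β
    have hαh := halpha_le_half β
    have hz1 : |(z 1 : ℝ)| ≤ Q β k := by
      rw [abs_le]
      constructor
      · nlinarith
      · nlinarith
    have hNu : N ≤ 2 * Q β k := by
      have := norm_upper z
      rw [hz0r] at this
      linarith
    -- rpow facts
    have hQβ := hQrpow1 β hβ k
    have hl := hQ'_lb β hβ k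
    have hu := hQ'_ub β hβ k
    have hQβpos : 0 < Q β k ^ β := lt_of_lt_of_le one_pos hQβ
    have hNβpos : 0 < N ^ β := Real.rpow_pos_of_pos hNpos β
    have hNβge : Q β k ^ β ≤ N ^ β := Real.rpow_le_rpow hQp.le hNl hβ
    have hNβle : N ^ β ≤ (2:ℝ)^β * Q β k ^ β := by
      have h1 : N ^ β ≤ (2 * Q β k) ^ β := Real.rpow_le_rpow (norm_nonneg _) hNu hβ
      rwa [Real.mul_rpow (by norm_num) hQp.le] at h1
    rw [hL0]
    constructor
    · -- lower bound
      have key : 3/16 ≤ D β k * N * N ^ β := by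
        have m0 : 3/4 ≤ D β k * Q β (k+1) := by linarith
        have m1 : D β k * Q β (k+1) ≤ D β k * (4 * (Q β k ^ β * Q β k)) :=
          mul_le_mul_of_nonneg_left hu hDp.le
        have m2 : 3/16 ≤ D β k * Q β k * Q β k ^ β := by nlinarith
        have m3 : D β k * Q β k * Q β k ^ β ≤ D β k * N * Q β k ^ β :=
          mul_le_mul_of_nonneg_right (mul_le_mul_of_nonneg_left hNl hDp.le) hQβpos.le
        have m4 : D β k * N * Q β k ^ β ≤ D β k * N * N ^ β :=
          mul_le_mul_of_nonneg_left hNβge (by positivity)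
        linarith
      rw [Real.rpow_neg hNpos.le]
      rw [show (1/8 : ℝ) * (N ^ β)⁻¹ = (1/8) / (N ^ β) by ring]
      rw [div_le_iff₀ hNβpos]
      nlinarith
    · -- upper bound
      have h2βpos : (0:ℝ) < (2:ℝ)^β := Real.rpow_pos_of_pos (by norm_num) β
      have key : D β k * N * N ^ β ≤ 2 * (2:ℝ)^β := by
        have m1 : D β k * (Q β k ^ β * Q β k) ≤ D β k * Q β (k+1) :=
          mul_le_mul_of_nonneg_left hl hDp.le
        have m2 : D β k * Q β k * Q β k ^ β ≤ 1 := by linarith [m1, hDub]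
        have m3 : D β k * N ≤ D β k * (2 * Q β k) := mul_le_mul_of_nonneg_left hNu hDp.le
        have m4 : D β k * N * N ^ β ≤ D β k * (2 * Q β k) * ((2:ℝ)^β * Q β k ^ β) := by
          apply mul_le_mul m3 hNβle hNβpos.le
          positivity
        have m5 := mul_le_mul_of_nonneg_left m2 (le_of_lt (by positivity : (0:ℝ) < 2 * (2:ℝ)^β))
        have m6 : D β k * (2 * Q β k) * ((2:ℝ)^β * Q β k ^ β)
            = 2 * (2:ℝ)^β * (D β k * Q β k * Q β k ^ β) := by ring
        rw [m6] at m4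
        linarith
      have h23 : (2:ℝ)^β ≤ (3:ℝ)^β := Real.rpow_le_rpow (by norm_num) (by norm_num) hβ
      have h3βpos : (0:ℝ) < (3:ℝ)^β := Real.rpow_pos_of_pos (by norm_num) β
      rw [Real.rpow_neg hNpos.le]
      rw [show (3 * (3:ℝ)^β) * (N ^ β)⁻¹ = (3 * (3:ℝ)^β) / (N ^ β) by ring]
      rw [le_div_iff₀ hNβpos]
      linarith
  · -- part (ii)
    intro z hz0 hnm
    obtain ⟨k, hk1, hk2⟩ := hbracket β |z 0| (Int.one_le_abs hz0)
    obtain ⟨a, b, h0, h1⟩ := hdecomp β k (z 0) (z 1)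
    by_cases hb : b = 0
    · exfalso
      apply hnm
      subst hb
      refine ⟨vk β k, a, best_vk β k, ?_⟩
      funext i
      fin_cases i
      · show z 0 = a • vk β k 0
        rw [smul_eq_mul, vk0, h0]; ring
      · show z 1 = a • vk β k 1
        rw [smul_eq_mul, vk1, h1]; ring
    · have ha : a ≠ 0 := by
        intro h
        subst h
        rw [zero_mul, zero_add] at h0
        have : |z 0| = |b| * q β (k+1) := by
          rw [h0, abs_mul, abs_of_pos (by linarith [hq1 β (k+1)] : (0:ℤ) < q β (k+1))]
        have hb1 : 1 ≤ |b| := Int.one_le_abs hb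
        nlinarith [hq1 β (k+1)]
      have hB := lemB β k a b ha hb (h0 ▸ hk1) (h0 ▸ hk2)
      have habs : |(a : ℝ) * (q β k : ℝ) + (b : ℝ) * (q β (k+1) : ℝ)| = |(z 0 : ℝ)| := by
        rw [h0]; push_cast; ring_nf
      rw [habs] at hB
      have hLv : |⟪avec β, toE 2 z⟫_ℝ| = |(a : ℝ) * D β k - (b : ℝ) * D β (k+1)| := by
        rw [inner_val]; exact hLval β k a b (z 0) (z 1) h0 h1
      rw [hLv]
      have hn := norm_lower z
      have habspos : (0:ℝ) ≤ |(a : ℝ) * D β k - (b : ℝ) * D β (k+1)| := abs_nonneg _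
      nlinarith [abs_nonneg ((z 0 : ℝ))]


end S4
end BAux

theorem stmt2 (β : ℝ) (hβ : 0 ≤ β) :
    ∃ α : E 2, α 1 = 1 ∧
      ∃ c1 c2 c3 : ℝ, 0 < c1 ∧ 0 < c2 ∧ 0 < c3 ∧
        (∀ z : Fin 2 → ℤ, IsBestApprox 2 α z →
          c1 * ‖toE 2 z‖ ^ (-β) ≤ |⟪α, toE 2 z⟫_ℝ| * ‖toE 2 z‖ ∧
          |⟪α, toE 2 z⟫_ℝ| * ‖toE 2 z‖ ≤ c2 * ‖toE 2 z‖ ^ (-β)) ∧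
        (∀ z : Fin 2 → ℤ, z 0 ≠ 0 →
          (¬ ∃ w : Fin 2 → ℤ, ∃ m : ℤ, IsBestApprox 2 α w ∧ z = m • w) →
          c3 ≤ |⟪α, toE 2 z⟫_ℝ| * ‖toE 2 z‖) := by
  exact BAux.main β hβ
end
end

section
/- Let d ≥ 3 and let z_1, …, z_d ∈ ℤ^d be a basis of ℤ^d such that z̲_1 ≠ 0 and z̲_2, …, z̲_d are linearly independent in ℝ^{d−1}. Then for each α ∈ 𝔖_2 we have (1/(D_{2,d−1} B_1^{d−1}))·(1 − 1/(2 B_1 B_2)) ≤ |L_α(z_1)| · |z̲_1|^{d−1} ≤ (1/(D_{2,d−1} B_1^{d−1}))·(1 + 1/(2 B_1 B_2)). -/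
open scoped InnerProductSpace

noncomputable section

lemma gramVol_eq_abs_det {m : ℕ} (v : Fin m → E m) :
    gramVol v = |(Matrix.of fun i j : Fin m => v i j).det| := by
  have h : (Matrix.of fun i j : Fin m => ⟪v i, v j⟫_ℝ) =
      (Matrix.of fun i j : Fin m => v i j) * (Matrix.of fun i j : Fin m => v i j).transpose := by
    ext i j
    simp [Matrix.mul_apply, PiLp.inner_apply, RCLike.inner_apply]
    exact Finset.sum_congr rfl (fun _ _ => mul_comm _ _)
  rw [gramVol, h, Matrix.det_mul, Matrix.det_transpose, ← sq, Real.sqrt_sq_eq_abs]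

lemma inner_eq_pr {m : ℕ} (x y : E (m+1)) (hx : x (Fin.last m) = 0) :
    ⟪x, y⟫_ℝ = ⟪pr (m+1) x, pr (m+1) y⟫_ℝ := by
  simp only [PiLp.inner_apply, RCLike.inner_apply, conj_trivial]
  rw [Fin.sum_univ_castSucc, hx]
  simp only [pr, zero_mul, add_zero]
  rw [mul_zero, add_zero]
  rfl

lemma norm_pr_le {m : ℕ} (x : E (m+1)) : ‖pr (m+1) x‖ ≤ ‖x‖ := by
  rw [EuclideanSpace.norm_eq, EuclideanSpace.norm_eq]
  apply Real.sqrt_le_sqrt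
  rw [Fin.sum_univ_castSucc]
  have h : ∀ i : Fin m, ‖pr (m+1) x i‖ = ‖x i.castSucc‖ := fun i => rfl
  simp only [h]
  exact le_add_of_nonneg_right (by positivity)

-- key determinant identity
lemma key_det (m : ℕ) (hm : 2 ≤ m) (z : ℕ → Fin (m+1) → ℤ)
    (hbasis : IsZBasis (m+1) (fun j => z (j.1 + 1)))
    (α2 : E (m+1)) (hα2pi : α2 ⟨m+1-1, by omega⟩ = 1)
    (hα2perp : ∀ i : Fin (m+1-1), ⟪α2, toE (m+1) (z (i.1 + 2))⟫_ℝ = 0) :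
    |⟪α2, toE (m+1) (z 1)⟫_ℝ| * detL (m+1) z 2 (m+1-1) = 1 := by
  set M0 : Matrix (Fin (m+1)) (Fin (m+1)) ℤ := Matrix.of fun i j => z (j.1+1) i with hM0
  set M : Matrix (Fin (m+1)) (Fin (m+1)) ℝ := M0.map (Int.cast) with hM
  have hdetM : |M.det| = 1 := by
    have h1 : M0.det = 1 ∨ M0.det = -1 := Int.isUnit_iff.mp hbasis
    have h2 : M.det = ((M0.det : ℤ) : ℝ) := by
      rw [hM]
      exact (RingHom.map_det (Int.castRingHom ℝ) M0).symm
    rcases h1 with h | h <;> simp [h2, h]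
  set c0 := ⟪α2, toE (m+1) (z 1)⟫_ℝ with hc0
  set r : Fin (m+1) → ℝ := fun j => ⟪α2, toE (m+1) (z (j.1+1))⟫_ℝ with hr
  have hrsum : r = ∑ i, α2 i • M i := by
    funext j
    simp only [Finset.sum_apply, Pi.smul_apply, smul_eq_mul, hr, hM, hM0,
      PiLp.inner_apply, RCLike.inner_apply, conj_trivial, Matrix.map_apply, Matrix.of_apply, toE]
    exact Finset.sum_congr rfl (fun _ _ => mul_comm _ _)
  set M' := M.updateRow (Fin.last m) r with hM'
  have hdetM' : M'.det = M.det := by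
    rw [hM', hrsum, Matrix.det_updateRow_sum]
    have : α2 (Fin.last m) = 1 := hα2pi
    rw [this, one_smul]
  set A : Matrix (Fin m) (Fin m) ℝ :=
    Matrix.of (fun i j : Fin m => pr (m+1) (toE (m+1) (z (2 + j.1))) i) with hA
  have hminor : M'.submatrix (Fin.last m).succAbove (0 : Fin (m+1)).succAbove = A := by
    ext i j
    simp only [Matrix.submatrix_apply, Fin.succAbove_last, Fin.succAbove_zero]
    rw [hM', Matrix.updateRow_ne (Fin.ne_of_lt (Fin.castSucc_lt_last i))]
    show ((z ((Fin.succ j).1 + 1) i.castSucc : ℤ) : ℝ) = _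
    rw [show (Fin.succ j).1 + 1 = 2 + j.1 from by simp [Fin.val_succ]; omega]
    rfl
  have hrj : ∀ j : Fin (m+1), j ≠ 0 → r j = 0 := by
    intro j hj
    have hj1 : 1 ≤ j.1 := by
      rcases Nat.eq_zero_or_pos j.1 with h | h
      · exact absurd (Fin.ext h) hj
      · omega
    have := hα2perp ⟨j.1 - 1, by omega⟩
    have hidx : (j.1 - 1) + 2 = j.1 + 1 := by omega
    rw [hidx] at this
    exact this
  have hr0 : r 0 = c0 := rfl
  have hval : ∀ j : Fin (m+1), M' (Fin.last m) j = r j := fun j => by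
    rw [hM', Matrix.updateRow_self]
  have hexp : M'.det = (-1)^(m : ℕ) * c0 * A.det := by
    rw [Matrix.det_succ_row M' (Fin.last m),
      Fintype.sum_eq_single (0 : Fin (m+1)) (fun j hj => by rw [hval j, hrj j hj]; ring)]
    rw [hminor, hval, hr0]
    norm_num
  have hdetL : detL (m+1) z 2 (m+1-1) = |A.det| := by
    rw [detL, gramVol_eq_abs_det, ← Matrix.det_transpose]
    congr 1
  have h5 : |M'.det| = |c0| * |A.det| := by
    rw [hexp, abs_mul, abs_mul, abs_pow, abs_neg, abs_one, one_pow, one_mul]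
  rw [hdetL, ← h5, hdetM']
  exact hdetM


theorem stmt6 (d : ℕ) (hd : 3 ≤ d) (z : ℕ → Fin d → ℤ)
    (hbasis : IsZBasis d (fun j => z (j.1 + 1)))
    (hz1 : pr d (toE d (z 1)) ≠ 0)
    (hlip : LinearIndependent ℝ (fun i : Fin (d - 1) => pr d (toE d (z (i.1 + 2)))))
    (α2 : E d) (hα2pi : α2 ⟨d - 1, by omega⟩ = 1)
    (hα2perp : ∀ i : Fin (d - 1), ⟪α2, toE d (z (i.1 + 2))⟫_ℝ = 0)
    (α : E d) (hαpi : α ⟨d - 1, by omega⟩ = 1) (hαS : ‖α - α2‖ ≤ Rq d z 2) :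
    1 / (Dq d z 2 (d - 1) * Bq d z 1 ^ (d - 1)) * (1 - 1 / (2 * Bq d z 1 * Bq d z 2)) ≤
        |⟪α, toE d (z 1)⟫_ℝ| * ‖pr d (toE d (z 1))‖ ^ (d - 1) ∧
      |⟪α, toE d (z 1)⟫_ℝ| * ‖pr d (toE d (z 1))‖ ^ (d - 1) ≤
        1 / (Dq d z 2 (d - 1) * Bq d z 1 ^ (d - 1)) * (1 + 1 / (2 * Bq d z 1 * Bq d z 2)) := by
  
  obtain ⟨m, rfl⟩ : ∃ m, d = m + 1 := ⟨d - 1, by omega⟩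
  have hm : 2 ≤ m := by omega
  have hkey := key_det m hm z hbasis α2 hα2pi hα2perp
  set Δ := detL (m+1) z 2 (m+1-1) with hΔdef
  set a1 := ‖pr (m+1) (toE (m+1) (z 1))‖ with ha1def
  set a2 := ‖pr (m+1) (toE (m+1) (z 2))‖ with ha2def
  set a3 := ‖pr (m+1) (toE (m+1) (z 3))‖ with ha3def
  set c0 := ⟪α2, toE (m+1) (z 1)⟫_ℝ with hc0def
  set e := ⟪α - α2, toE (m+1) (z 1)⟫_ℝ with hedef
  have ha1p : 0 < a1 := norm_pos_iff.mpr hz1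
  have ha2p : 0 < a2 := norm_pos_iff.mpr (hlip.ne_zero ⟨0, by omega⟩)
  have ha3p : 0 < a3 := norm_pos_iff.mpr (hlip.ne_zero ⟨1, by omega⟩)
  have hΔ0 : 0 ≤ Δ := Real.sqrt_nonneg _
  have hΔne : Δ ≠ 0 := by
    intro h
    rw [h, mul_zero] at hkey
    norm_num at hkey
  have hΔp : 0 < Δ := lt_of_le_of_ne hΔ0 (Ne.symm hΔne)
  have hc0abs : |c0| = 1 / Δ := by
    field_simp
    linarith [hkey]
  have hαl : α (Fin.last m) = 1 := hαpi
  have hα2l : α2 (Fin.last m) = 1 := hα2pi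
  have hsub : (α - α2) (Fin.last m) = 0 := by
    show α (Fin.last m) - α2 (Fin.last m) = 0
    rw [hαl, hα2l]; ring
  have hRq : Rq (m+1) z 2 = 1 / (2 * a3 * Δ) := rfl
  have hEbound : |e| ≤ a1 / (2 * a3 * Δ) := by
    rw [hedef, inner_eq_pr _ _ hsub]
    calc |⟪pr (m+1) (α - α2), pr (m+1) (toE (m+1) (z 1))⟫_ℝ|
        ≤ ‖pr (m+1) (α - α2)‖ * a1 := abs_real_inner_le_norm _ _
      _ ≤ ‖α - α2‖ * a1 := mul_le_mul_of_nonneg_right (norm_pr_le _) ha1p.le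
      _ ≤ (1 / (2 * a3 * Δ)) * a1 := by
          rw [← hRq]; exact mul_le_mul_of_nonneg_right hαS ha1p.le
      _ = a1 / (2 * a3 * Δ) := by ring
  have hsplit : ⟪α, toE (m+1) (z 1)⟫_ℝ = c0 + e := by
    rw [hedef, hc0def, inner_sub_left]; ring
  have hup : |⟪α, toE (m+1) (z 1)⟫_ℝ| ≤ 1 / Δ + a1 / (2 * a3 * Δ) := by
    rw [hsplit]
    calc |c0 + e| ≤ |c0| + |e| := abs_add_le _ _
      _ ≤ 1 / Δ + a1 / (2 * a3 * Δ) := by rw [hc0abs]; linarith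
  have hlow : 1 / Δ - a1 / (2 * a3 * Δ) ≤ |⟪α, toE (m+1) (z 1)⟫_ℝ| := by
    rw [hsplit]
    have h1 : |c0| - |e| ≤ |c0 + e| := by
      have := abs_sub_abs_le_abs_sub c0 (-e)
      simpa [sub_neg_eq_add] using this
    rw [hc0abs] at h1
    linarith
  have hD : Dq (m+1) z 2 (m+1-1) = Δ / a2 ^ m := rfl
  have hB1 : Bq (m+1) z 1 = a2 / a1 := rfl
  have hB2 : Bq (m+1) z 2 = a3 / a2 := rfl
  rw [hD, hB1, hB2]
  simp only [Nat.add_sub_cancel]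
  constructor
  · calc 1 / (Δ / a2 ^ m * (a2 / a1) ^ m) * (1 - 1 / (2 * (a2 / a1) * (a3 / a2)))
        = (1 / Δ - a1 / (2 * a3 * Δ)) * a1 ^ m := by
          rw [div_pow]
          field_simp
      _ ≤ |⟪α, toE (m+1) (z 1)⟫_ℝ| * a1 ^ m :=
          mul_le_mul_of_nonneg_right hlow (by positivity)
  · calc |⟪α, toE (m+1) (z 1)⟫_ℝ| * a1 ^ m
        ≤ (1 / Δ + a1 / (2 * a3 * Δ)) * a1 ^ m :=
          mul_le_mul_of_nonneg_right hup (by positivity)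
      _ = 1 / (Δ / a2 ^ m * (a2 / a1) ^ m) * (1 + 1 / (2 * (a2 / a1) * (a3 / a2))) := by
          rw [div_pow]
          field_simp
end
end
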